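/- Let e₁,…,e_n be an orthonormal basis of ℝ^n and let e*_I denote the axis p-form for a strictly increasing multi-index I of length p. Then ‖e*₁∧⋯∧e*_p + Σ_I b_I e*_I‖* ≤ max{1, Σ_I |b_I|}, provided that b_I = 0 whenever the second-to-last index i_{p-1} of I satisfies i_{p-1} ≤ p. -/

import Mathlib

/-- The comass of an alternating `p`-form `φ` with respect to a bilinear form
(inner product) `g`. -/
noncomputable def comass {W : Type*} [AddCommGroup W] [Module ℝ W] {p : ℕ}
    (φ : W [⋀^Fin p]→ₗ[ℝ] ℝ) (g : W →ₗ[ℝ] W →ₗ[ℝ] ℝ) : ℝ :=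
  sSup {c | ∃ v : Fin p → W,
    (Matrix.of fun i j : Fin p => g (v i) (v j)).det = 1 ∧ φ v = c}

/-- The standard Euclidean inner product on `ℝⁿ` as a bilinear form. -/
noncomputable def stdG (n : ℕ) : (Fin n → ℝ) →ₗ[ℝ] (Fin n → ℝ) →ₗ[ℝ] ℝ :=
  LinearMap.mk₂ ℝ (fun x y => ∑ i, x i * y i)
    (fun x₁ x₂ y => by simp [add_mul, Finset.sum_add_distrib])
    (fun c x y => by simp [Finset.mul_sum, mul_assoc])
    (fun x y₁ y₂ => by simp [mul_add, Finset.sum_add_distrib])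
    (fun c x y => by
      simp only [Pi.smul_apply, smul_eq_mul, Finset.mul_sum]
      exact Finset.sum_congr rfl fun i _ => by ring)

/-- The axis `p`-form `e*_I = e*_{i₁} ∧ ⋯ ∧ e*_{i_p}` on `ℝⁿ`. -/
noncomputable def axisForm {n p : ℕ} (I : Fin p → Fin n) :
    (Fin n → ℝ) [⋀^Fin p]→ₗ[ℝ] ℝ :=
  ((Pi.basisFun ℝ (Fin p)).det).compLinearMap (LinearMap.funLeft ℝ ℝ I)

open Matrix Finset Function

namespace HLaux

variable {p n : ℕ}

local notation "ε " σ:arg => ((Equiv.Perm.sign σ : ℤ) : ℝ)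

lemma det_sub_eq_sum (M : Matrix (Fin p) (Fin n) ℝ) (f : Fin p → Fin n) :
    (M.submatrix id f).det = ∑ σ : Equiv.Perm (Fin p), ε σ * ∏ i, M (σ i) (f i) := by
  rw [det_apply']
  rfl

lemma cb1 (M : Matrix (Fin p) (Fin n) ℝ) :
    (M * Mᵀ).det = ∑ f : Fin p → Fin n, (∏ i, M i (f i)) * (M.submatrix id f).det := by
  calc (M * Mᵀ).det = ∑ σ : Equiv.Perm (Fin p), ε σ * ∏ i, ∑ k, M (σ i) k * M i k := by
        rw [det_apply']
        refine Finset.sum_congr rfl fun σ _ => ?_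
        simp [Matrix.mul_apply]
    _ = ∑ σ : Equiv.Perm (Fin p), ∑ f : Fin p → Fin n,
          ε σ * ((∏ i, M (σ i) (f i)) * ∏ i, M i (f i)) := by
        refine Finset.sum_congr rfl fun σ _ => ?_
        rw [Finset.prod_univ_sum (fun _ => (univ : Finset (Fin n)))
          (fun i k => M (σ i) k * M i k), Fintype.piFinset_univ, Finset.mul_sum]
        exact Finset.sum_congr rfl fun f _ => by rw [Finset.prod_mul_distrib]
    _ = ∑ f : Fin p → Fin n, (∏ i, M i (f i)) *
          ∑ σ : Equiv.Perm (Fin p), ε σ * ∏ i, M (σ i) (f i) := by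
        rw [Finset.sum_comm]
        refine Finset.sum_congr rfl fun f _ => ?_
        rw [Finset.mul_sum]
        exact Finset.sum_congr rfl fun σ _ => by ring
    _ = _ := by
        refine Finset.sum_congr rfl fun f _ => ?_
        rw [det_sub_eq_sum]

lemma det_sub_comp (M : Matrix (Fin p) (Fin n) ℝ) (f : Fin p → Fin n)
    (σ : Equiv.Perm (Fin p)) :
    (M.submatrix id (f ∘ σ)).det = ε σ * (M.submatrix id f).det := by
  have h : M.submatrix id (f ∘ σ) = (M.submatrix id f).submatrix id σ := rfl
  rw [h, det_permute']

lemma sq_sign (σ : Equiv.Perm (Fin p)) : (ε σ) * (ε σ) = 1 := by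
  rcases Int.units_eq_one_or (Equiv.Perm.sign σ) with h | h <;> rw [h] <;> norm_num

lemma cb3 (M : Matrix (Fin p) (Fin n) ℝ) :
    ∑ f : Fin p → Fin n, (M.submatrix id f).det ^ 2
      = (Nat.factorial p : ℝ) * (M * Mᵀ).det := by
  have step : ∀ σ : Equiv.Perm (Fin p),
      (∑ f : Fin p → Fin n, (∏ i, M (σ i) (f i)) * (M.submatrix id f).det)
        = ε σ * (M * Mᵀ).det := by
    intro σ
    have h1 : ∀ f : Fin p → Fin n, (∏ i, M (σ i) (f i)) = ∏ i, M i (f (σ.symm i)) := by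
      intro f
      rw [← Equiv.prod_comp σ (fun i => M i (f (σ.symm i)))]
      simp
    calc (∑ f : Fin p → Fin n, (∏ i, M (σ i) (f i)) * (M.submatrix id f).det)
        = ∑ f : Fin p → Fin n, (∏ i, M i (f (σ.symm i))) * (M.submatrix id f).det := by
          exact Finset.sum_congr rfl fun f _ => by rw [h1]
      _ = ∑ g : Fin p → Fin n, (∏ i, M i (g i)) * (M.submatrix id (g ∘ σ)).det := by
          refine Fintype.sum_equiv (Equiv.arrowCongr σ (Equiv.refl (Fin n))) _ _ ?_
          intro f
          have hg : ((Equiv.arrowCongr σ (Equiv.refl (Fin n))) f) = f ∘ σ.symm := by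
            ext i; simp [Equiv.arrowCongr]
          rw [hg]
          have h2 : (f ∘ ⇑σ.symm) ∘ ⇑σ = f := by ext i; simp
          rw [h2]
          exact congrArg (· * _) (Finset.prod_congr rfl fun i _ => by simp)
      _ = ∑ g : Fin p → Fin n, (∏ i, M i (g i)) * (ε σ * (M.submatrix id g).det) := by
          exact Finset.sum_congr rfl fun g _ => by rw [det_sub_comp]
      _ = ε σ * (M * Mᵀ).det := by
          rw [cb1, Finset.mul_sum]
          exact Finset.sum_congr rfl fun g _ => by ring
  calc ∑ f : Fin p → Fin n, (M.submatrix id f).det ^ 2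
      = ∑ f : Fin p → Fin n, (∑ σ : Equiv.Perm (Fin p), ε σ * ∏ i, M (σ i) (f i))
          * (M.submatrix id f).det := by
        exact Finset.sum_congr rfl fun f _ => by rw [sq, det_sub_eq_sum]
    _ = ∑ f : Fin p → Fin n, ∑ σ : Equiv.Perm (Fin p),
          ε σ * ((∏ i, M (σ i) (f i)) * (M.submatrix id f).det) := by
        refine Finset.sum_congr rfl fun f _ => ?_
        rw [Finset.sum_mul]
        exact Finset.sum_congr rfl fun σ _ => by ring
    _ = ∑ σ : Equiv.Perm (Fin p), ε σ *
          ∑ f : Fin p → Fin n, (∏ i, M (σ i) (f i)) * (M.submatrix id f).det := by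
        rw [Finset.sum_comm]
        refine Finset.sum_congr rfl fun σ _ => ?_
        rw [Finset.mul_sum]
    _ = ∑ σ : Equiv.Perm (Fin p), ε σ * (ε σ * (M * Mᵀ).det) := by
        exact Finset.sum_congr rfl fun σ _ => by rw [step σ]
    _ = (Nat.factorial p : ℝ) * (M * Mᵀ).det := by
        have : ∀ σ : Equiv.Perm (Fin p), ε σ * (ε σ * (M * Mᵀ).det) = (M * Mᵀ).det := by
          intro σ
          rw [← mul_assoc, sq_sign, one_mul]
        rw [Finset.sum_congr rfl fun σ _ => this σ, Finset.sum_const, Finset.card_univ,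
          Fintype.card_perm, Fintype.card_fin, nsmul_eq_mul]

/-- Bessel-type inequality: a family of column-selections with pairwise
distinct ranges contributes at most `det (M * Mᵀ)` in squares. -/
lemma master {ι : Type*} [DecidableEq ι] (M : Matrix (Fin p) (Fin n) ℝ)
    (s : Finset ι) (T : ι → (Fin p → Fin n))
    (hinj : ∀ e ∈ s, Function.Injective (T e))
    (hd : ∀ e ∈ s, ∀ e' ∈ s, Set.range (T e) = Set.range (T e') → e = e') :
    ∑ e ∈ s, ((M.submatrix id (T e)).det) ^ 2 ≤ (M * Mᵀ).det := by
  have hfac : (0:ℝ) < (Nat.factorial p : ℝ) := by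
    exact_mod_cast Nat.factorial_pos p
  rw [← mul_le_mul_iff_right₀ hfac, ← cb3]
  have hmap : ∀ x ∈ s ×ˢ (univ : Finset (Equiv.Perm (Fin p))),
      ∀ y ∈ s ×ˢ (univ : Finset (Equiv.Perm (Fin p))),
      T x.1 ∘ (x.2 : Equiv.Perm (Fin p)) = T y.1 ∘ (y.2 : Equiv.Perm (Fin p)) → x = y := by
    rintro ⟨e, σ⟩ hx ⟨e', σ'⟩ hy h
    simp only [Finset.mem_product, Finset.mem_univ, and_true] at hx hy
    have hr : Set.range (T e) = Set.range (T e') := by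
      have h1 : Set.range (T e ∘ σ) = Set.range (T e) := by
        rw [Set.range_comp, Equiv.range_eq_univ, Set.image_univ]
      have h2 : Set.range (T e' ∘ σ') = Set.range (T e') := by
        rw [Set.range_comp, Equiv.range_eq_univ, Set.image_univ]
      rw [← h1, ← h2, h]
    have he : e = e' := hd e hx e' hy hr
    subst he
    have hσ : σ = σ' := Equiv.ext fun i => hinj e hx (congrFun h i)
    rw [hσ]
  calc (Nat.factorial p : ℝ) * ∑ e ∈ s, ((M.submatrix id (T e)).det) ^ 2
      = ∑ x ∈ s ×ˢ (univ : Finset (Equiv.Perm (Fin p))),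
          ((M.submatrix id (T x.1 ∘ (x.2 : Equiv.Perm (Fin p)))).det) ^ 2 := by
        rw [Finset.sum_product]
        rw [Finset.mul_sum]
        refine Finset.sum_congr rfl fun e _ => ?_
        have : ∀ σ : Equiv.Perm (Fin p),
            ((M.submatrix id (T e ∘ σ)).det) ^ 2 = ((M.submatrix id (T e)).det) ^ 2 := by
          intro σ
          rw [det_sub_comp, mul_pow, sq, sq_sign, one_mul]
        rw [Finset.sum_congr rfl fun σ _ => this σ, Finset.sum_const, Finset.card_univ,
          Fintype.card_perm, Fintype.card_fin, nsmul_eq_mul]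
    _ = ∑ f ∈ (s ×ˢ (univ : Finset (Equiv.Perm (Fin p)))).image
          (fun x => T x.1 ∘ (x.2 : Equiv.Perm (Fin p))),
          ((M.submatrix id f).det) ^ 2 := by
        rw [Finset.sum_image hmap]
    _ ≤ ∑ f : Fin p → Fin n, ((M.submatrix id f).det) ^ 2 := by
        refine Finset.sum_le_sum_of_subset_of_nonneg (Finset.subset_univ _) ?_
        intro f _ _
        positivity

lemma det_updateColumn_lin (B : Matrix (Fin p) (Fin p) ℝ) (j : Fin p)
    (s : Finset (Fin p)) (t : Fin p → ℝ) (u : Fin p → Fin p → ℝ) :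
    (B.updateCol j (fun k => ∑ i ∈ s, t i * u i k)).det
      = ∑ i ∈ s, t i * (B.updateCol j (u i)).det := by
  induction s using Finset.induction_on with
  | empty =>
      simp only [Finset.sum_empty]
      exact Matrix.det_eq_zero_of_column_eq_zero j (fun i => by simp)
  | @insert a s ha ih =>
      rw [Finset.sum_insert ha]
      have h1 : (fun k => ∑ i ∈ insert a s, t i * u i k)
          = (t a • u a) + (fun k => ∑ i ∈ s, t i * u i k) := by
        ext k
        simp [Finset.sum_insert ha]
      rw [h1, Matrix.det_updateCol_add, Matrix.det_updateCol_smul, ih]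

/-- Sylvester / Plücker exchange identity. -/
lemma sylvester (A B : Matrix (Fin p) (Fin p) ℝ) (j : Fin p) :
    A.det * B.det = ∑ i, (A.updateCol i (fun k => B k j)).det
      * (B.updateCol j (fun k => A k i)).det := by
  symm
  have h1 : ∀ i, (A.updateCol i (fun k => B k j)).det
      = A.cramer (fun k => B k j) i := fun i => (Matrix.cramer_apply _ _ _).symm
  calc ∑ i, (A.updateCol i (fun k => B k j)).det
        * (B.updateCol j (fun k => A k i)).det
      = ∑ i, A.cramer (fun k => B k j) i * (B.updateCol j (fun k => A k i)).det := by
        exact Finset.sum_congr rfl fun i _ => by rw [h1]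
    _ = (B.updateCol j (fun k => ∑ i, A.cramer (fun k => B k j) i * A k i)).det := by
        rw [det_updateColumn_lin]
    _ = (B.updateCol j (A *ᵥ A.cramer (fun k => B k j))).det := by
        have h2 : (fun k => ∑ i, A.cramer (fun k => B k j) i * A k i)
            = A *ᵥ A.cramer (fun k => B k j) := by
          ext k
          simp only [Matrix.mulVec, dotProduct]
          exact Finset.sum_congr rfl fun i _ => mul_comm _ _
        rw [h2]
    _ = (B.updateCol j (A.det • fun k => B k j)).det := by
        rw [Matrix.mulVec_cramer]
    _ = A.det * (B.updateCol j (fun k => B k j)).det := by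
        rw [Matrix.det_updateCol_smul]
    _ = A.det * B.det := by rw [Matrix.updateCol_eq_self]

end HLaux

namespace HLaux

lemma key (M : Matrix (Fin p) (Fin n) ℝ) (hM : (M * Mᵀ).det = 1)
    (J K : Fin p → Fin n) (hJ : Function.Injective J) (hK : Function.Injective K)
    (a b : Fin n) (hab : a ≠ b)
    (haK : a ∈ Set.range K) (hbK : b ∈ Set.range K)
    (haJ : a ∉ Set.range J) (hbJ : b ∉ Set.range J) :
    |(M.submatrix id J).det| + |(M.submatrix id K).det| ≤ 1 := by
  classical
  obtain ⟨j₀, hj₀⟩ := haK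
  set P : Fin p → (Fin p → Fin n) := fun i => Function.update J i a with hPdef
  set Q : Fin p → (Fin p → Fin n) := fun i => Function.update K j₀ (J i) with hQdef
  set x := (M.submatrix id J).det with hx
  set y := (M.submatrix id K).det with hy
  set zP : Fin p → ℝ := fun i => (M.submatrix id (P i)).det with hzP
  set zQ : Fin p → ℝ := fun i => (M.submatrix id (Q i)).det with hzQ
  -- range facts
  have fPa : ∀ i, a ∈ Set.range (P i) := fun i => ⟨i, by simp [hPdef]⟩
  have fPb : ∀ i, b ∉ Set.range (P i) := by
    rintro i ⟨l, hl⟩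
    rcases eq_or_ne l i with h | h
    · rw [h] at hl; simp [hPdef] at hl; exact hab hl
    · rw [hPdef] at hl; simp [Function.update_of_ne h] at hl
      exact hbJ ⟨l, hl⟩
  have fQa : ∀ i, a ∉ Set.range (Q i) := by
    rintro i ⟨l, hl⟩
    rcases eq_or_ne l j₀ with h | h
    · rw [h] at hl; simp [hQdef] at hl; exact haJ ⟨i, hl⟩
    · rw [hQdef] at hl; simp [Function.update_of_ne h] at hl
      exact h (hK (hl.trans hj₀.symm))
  have fQb : ∀ i, b ∈ Set.range (Q i) := by
    intro i
    obtain ⟨j₁, hj₁⟩ := hbK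
    have hne : j₁ ≠ j₀ := fun h => hab (hj₀.symm.trans (h ▸ hj₁))
    exact ⟨j₁, by simp [hQdef, Function.update_of_ne hne, hj₁]⟩
  have fQJ : ∀ i, J i ∈ Set.range (Q i) := fun i => ⟨j₀, by simp [hQdef]⟩
  have fKa : a ∈ Set.range K := ⟨j₀, hj₀⟩
  have fPJ : ∀ i l, l ≠ i → J l ∈ Set.range (P i) := fun i l h =>
    ⟨l, by simp [hPdef, Function.update_of_ne h]⟩
  have fPJi : ∀ i, J i ∉ Set.range (P i) := by
    rintro i ⟨l, hl⟩
    rcases eq_or_ne l i with h | h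
    · rw [h] at hl; simp [hPdef] at hl; exact haJ ⟨i, hl.symm⟩
    · rw [hPdef] at hl; simp [Function.update_of_ne h] at hl
      exact h (hJ hl)
  have fQJ' : ∀ i i', i ≠ i' → J i ∉ Set.range K → J i ∉ Set.range (Q i') := by
    rintro i i' hne hKi ⟨l, hl⟩
    rcases eq_or_ne l j₀ with h | h
    · rw [h] at hl; simp [hQdef] at hl; exact hne (hJ hl.symm)
    · rw [hQdef] at hl; simp [Function.update_of_ne h] at hl
      exact hKi ⟨l, hl⟩
  -- injectivity facts
  have hPinj : ∀ i, Function.Injective (P i) := by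
    intro i l l' h
    rw [hPdef] at h
    simp only [Function.update_apply] at h
    split_ifs at h with h1 h2 h2
    · rw [h1, h2]
    · exact absurd ⟨l', h.symm⟩ haJ
    · exact absurd ⟨l, h⟩ haJ
    · exact hJ h
  have hQinj : ∀ i, J i ∉ Set.range K → Function.Injective (Q i) := by
    intro i hi l l' h
    rw [hQdef] at h
    simp only [Function.update_apply] at h
    split_ifs at h with h1 h2 h2
    · rw [h1, h2]
    · exact absurd ⟨l', h.symm⟩ hi
    · exact absurd ⟨l, h⟩ hi
    · exact hK h
  -- Q determinant vanishes when J i ∈ range K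
  have hQ0 : ∀ i, J i ∈ Set.range K → zQ i = 0 := by
    rintro i ⟨j₁, hj₁⟩
    have hne : j₀ ≠ j₁ := by
      rintro rfl
      exact haJ ⟨i, (hj₀.symm.trans hj₁).symm⟩
    refine Matrix.det_zero_of_column_eq hne (fun k => ?_)
    simp [hQdef, Function.update_of_ne (Ne.symm hne), hj₁]
  -- exchange identity
  have hexch : x * y = ∑ i, zP i * zQ i := by
    rw [hx, hy, sylvester (M.submatrix id J) (M.submatrix id K) j₀]
    refine Finset.sum_congr rfl fun i _ => ?_
    have e1 : (M.submatrix id J).updateCol i (fun k => (M.submatrix id K) k j₀)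
        = M.submatrix id (P i) := by
      ext k l
      rw [Matrix.updateCol_apply]
      rcases eq_or_ne l i with h | h
      · simp [h, hPdef, hj₀]
      · simp [h, hPdef, Function.update_of_ne h]
    have e2 : (M.submatrix id K).updateCol j₀ (fun k => (M.submatrix id J) k i)
        = M.submatrix id (Q i) := by
      ext k l
      rw [Matrix.updateCol_apply]
      rcases eq_or_ne l j₀ with h | h
      · simp [h, hQdef]
      · simp [h, hQdef, Function.update_of_ne h]
    rw [e1, e2]
  -- the master inequality
  set S : Finset (Fin p) := Finset.univ.filter (fun i => J i ∉ Set.range K) with hS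
  set T : Bool ⊕ (Fin p ⊕ Fin p) → (Fin p → Fin n) :=
    Sum.elim (fun c => if c then J else K) (Sum.elim P Q) with hT
  have hTt : T (Sum.inl true) = J := by simp [hT]
  have hTf : T (Sum.inl false) = K := by simp [hT]
  have hTP : ∀ i, T (Sum.inr (Sum.inl i)) = P i := fun i => by simp [hT]
  have hTQ : ∀ i, T (Sum.inr (Sum.inr i)) = Q i := fun i => by simp [hT]
  have hmemS : ∀ i : Fin p, Sum.inr (Sum.inr i) ∈
      ((Finset.univ : Finset Bool).disjSum
        ((Finset.univ : Finset (Fin p)).disjSum S)) → J i ∉ Set.range K := by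
    intro i hi
    rw [Finset.inr_mem_disjSum, Finset.inr_mem_disjSum, hS, Finset.mem_filter] at hi
    exact hi.2
  have hmaster : x^2 + y^2 + (∑ i, zP i ^2 + ∑ i ∈ S, zQ i ^2) ≤ 1 := by
    rw [← hM]
    have hm := master (ι := Bool ⊕ (Fin p ⊕ Fin p)) M
      ((Finset.univ : Finset Bool).disjSum
        ((Finset.univ : Finset (Fin p)).disjSum S)) T ?_ ?_
    · refine le_trans (le_of_eq ?_) hm
      rw [Finset.sum_disjSum, Finset.sum_disjSum, Fintype.sum_bool,
        hTt, hTf]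
      have h1 : ∀ i : Fin p, ((M.submatrix id (T (Sum.inr (Sum.inl i)))).det)^2
          = zP i ^ 2 := fun i => by rw [hTP, hzP]
      have h2 : ∀ i : Fin p, ((M.submatrix id (T (Sum.inr (Sum.inr i)))).det)^2
          = zQ i ^ 2 := fun i => by rw [hTQ, hzQ]
      rw [Finset.sum_congr rfl (fun i _ => h1 i), Finset.sum_congr rfl (fun i _ => h2 i),
        ← hx, ← hy]
    · rintro (c | i | i) he
      · rcases c with _ | _
        · rw [hTf]; exact hK
        · rw [hTt]; exact hJ
      · rw [hTP]; exact hPinj i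
      · rw [hTQ]; exact hQinj i (hmemS i he)
    · rintro (c | i | i) he (c' | i' | i') he' hr
      · rcases c with _ | _ <;> rcases c' with _ | _
        · rfl
        · rw [hTt, hTf] at hr
          exact absurd (show b ∈ Set.range J from hr ▸ hbK) hbJ
        · rw [hTt, hTf] at hr
          exact absurd (show b ∈ Set.range J from hr.symm ▸ hbK) hbJ
        · rfl
      · rcases c with _ | _
        · rw [hTf, hTP] at hr
          exact absurd (show b ∈ Set.range (P i') from hr ▸ hbK) (fPb i')
        · rw [hTt, hTP] at hr
          exact absurd (show a ∈ Set.range J from hr.symm ▸ fPa i') haJ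
      · rcases c with _ | _
        · rw [hTf, hTQ] at hr
          exact absurd (show a ∈ Set.range (Q i') from hr ▸ fKa) (fQa i')
        · rw [hTt, hTQ] at hr
          exact absurd (show b ∈ Set.range J from hr.symm ▸ fQb i') hbJ
      · rcases c' with _ | _
        · rw [hTf, hTP] at hr
          exact absurd (show b ∈ Set.range (P i) from hr.symm ▸ hbK) (fPb i)
        · rw [hTt, hTP] at hr
          exact absurd (show a ∈ Set.range J from hr ▸ fPa i) haJ
      · rw [hTP, hTP] at hr
        rcases eq_or_ne i i' with h | h
        · rw [h]
        · have h1 : J i ∈ Set.range (P i') := fPJ i' i h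
          exact absurd (show J i ∈ Set.range (P i) from hr.symm ▸ h1) (fPJi i)
      · rw [hTP, hTQ] at hr
        exact absurd (show a ∈ Set.range (Q i') from hr ▸ fPa i) (fQa i')
      · rcases c' with _ | _
        · rw [hTf, hTQ] at hr
          exact absurd (show a ∈ Set.range (Q i) from hr.symm ▸ fKa) (fQa i)
        · rw [hTt, hTQ] at hr
          exact absurd (show b ∈ Set.range J from hr ▸ fQb i) hbJ
      · rw [hTQ, hTP] at hr
        exact absurd (show a ∈ Set.range (Q i) from hr.symm ▸ fPa i') (fQa i)
      · rw [hTQ, hTQ] at hr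
        rcases eq_or_ne i i' with h | h
        · rw [h]
        · have h1 : J i ∉ Set.range (Q i') := fQJ' i i' h (hmemS i he)
          exact absurd (show J i ∈ Set.range (Q i') from hr ▸ fQJ i) h1
  -- combine
  have habs : 2 * |x * y| ≤ ∑ i, zP i ^2 + ∑ i ∈ S, zQ i ^2 := by
    have h1 : ∑ i ∈ S, zQ i ^2 = ∑ i, zQ i ^2 := by
      rw [hS]
      refine Finset.sum_filter_of_ne (fun i _ hne => ?_)
      intro hmem
      exact hne (by rw [hQ0 i hmem]; ring)
    rw [h1, ← Finset.sum_add_distrib]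
    calc 2 * |x * y| = 2 * |∑ i, zP i * zQ i| := by rw [hexch]
      _ ≤ 2 * ∑ i, |zP i * zQ i| := by
          have := Finset.abs_sum_le_sum_abs (fun i => zP i * zQ i) Finset.univ
          linarith
      _ = ∑ i, 2 * (|zP i| * |zQ i|) := by
          rw [Finset.mul_sum]
          exact Finset.sum_congr rfl fun i _ => by rw [abs_mul]
      _ ≤ ∑ i, (zP i ^2 + zQ i ^2) := by
          refine Finset.sum_le_sum fun i _ => ?_
          nlinarith [sq_nonneg (|zP i| - |zQ i|), sq_abs (zP i), sq_abs (zQ i)]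
  have hsum : (|x| + |y|)^2 ≤ 1 := by
    have h3 : (|x| + |y|)^2 = x^2 + y^2 + 2 * |x * y| := by
      rw [add_sq, sq_abs, sq_abs, abs_mul]
      ring
    linarith [hmaster, habs]
  nlinarith [abs_nonneg x, abs_nonneg y, hsum]

end HLaux

lemma alt_sum_apply {N : ℕ} {W : Type*} [AddCommGroup W] [Module ℝ W]
    {ι' : Type*} (s : Finset ι') (f : ι' → (W [⋀^Fin N]→ₗ[ℝ] ℝ)) (v : Fin N → W) :
    (∑ i ∈ s, f i) v = ∑ i ∈ s, f i v := by
  induction s using Finset.cons_induction with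
  | empty => simp
  | cons a s ha ih => rw [Finset.sum_cons, AlternatingMap.add_apply, ih, Finset.sum_cons]

set_option maxHeartbeats 1000000

/-- Harvey–Lawson (Calibrated foliations, Cor. 2.11):
`‖e*₁∧⋯∧e*_p + Σ_I b_I e*_I‖* ≤ max {1, Σ_I |b_I|}` provided `b_I = 0` whenever
the second-to-last index `i_{p-1}` of `I` satisfies `i_{p-1} ≤ p`
(0-indexed: `I ⟨p-2⟩ < p`); the coefficients are supported on strictly
increasing multi-indices. -/
theorem stmt6 (n p : ℕ) (hp2 : 2 ≤ p) (hpn : p ≤ n)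
    (b : (Fin p → Fin n) → ℝ)
    (hbmono : ∀ I : Fin p → Fin n, ¬ StrictMono I → b I = 0)
    (hb : ∀ I : Fin p → Fin n, StrictMono I →
      ((I ⟨p - 2, by omega⟩ : ℕ) < p) → b I = 0) :
    comass (axisForm (Fin.castLE hpn) + ∑ I : Fin p → Fin n, b I • axisForm I)
      (stdG n) ≤ max 1 (∑ I : Fin p → Fin n, |b I|) := by
  classical
  have hmax0 : (0:ℝ) ≤ max 1 (∑ I : Fin p → Fin n, |b I|) :=
    le_trans zero_le_one (le_max_left _ _)
  refine Real.sSup_le ?_ hmax0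
  rintro c ⟨v, hdet, rfl⟩
  set M : Matrix (Fin p) (Fin n) ℝ := Matrix.of v with hMdef
  have hMM : (M * Mᵀ).det = 1 := by
    have h : (Matrix.of fun i j : Fin p => (stdG n) (v i) (v j)) = M * Mᵀ := by
      ext i j
      simp [stdG, Matrix.mul_apply, hMdef]
    rwa [h] at hdet
  have hax : ∀ I : Fin p → Fin n, axisForm I v = (M.submatrix id I).det := by
    intro I
    have h1 : axisForm I v = (Pi.basisFun ℝ (Fin p)).det (fun i => v i ∘ I) := rfl
    have h2 : (Pi.basisFun ℝ (Fin p)).toMatrix (fun i => v i ∘ I)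
        = (M.submatrix id I)ᵀ := by
      ext i j
      simp [Module.Basis.toMatrix_apply, hMdef]
    rw [h1, Module.Basis.det_apply, h2, Matrix.det_transpose]
  set x := (M.submatrix id (Fin.castLE hpn)).det with hxdef
  have happ : (axisForm (Fin.castLE hpn) + ∑ I : Fin p → Fin n, b I • axisForm I) v
      = x + ∑ I : Fin p → Fin n, b I * (M.submatrix id I).det := by
    rw [AlternatingMap.add_apply]
    congr 1
    · exact hax _
    · rw [alt_sum_apply]
      refine Finset.sum_congr rfl fun I _ => ?_
      rw [AlternatingMap.smul_apply, hax I, smul_eq_mul]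
  have hx2 : x^2 ≤ 1 := by
    have hm := HLaux.master (ι := Unit) M {Unit.unit} (fun _ => Fin.castLE hpn)
      (fun _ _ => Fin.castLE_injective hpn) (fun e _ e' _ _ => Subsingleton.elim e e')
    rw [hMM] at hm
    simpa using hm
  have hx1 : |x| ≤ 1 := by
    nlinarith [sq_abs x, abs_nonneg x]
  have hkey : ∀ I : Fin p → Fin n, b I ≠ 0 →
      |x| + |(M.submatrix id I).det| ≤ 1 := by
    intro I hbI
    have hmono : StrictMono I := by
      by_contra h
      exact hbI (hbmono I h)
    have h2 : p ≤ (I ⟨p - 2, by omega⟩ : ℕ) := by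
      by_contra h
      exact hbI (hb I hmono (by omega))
    have hlt : (⟨p - 2, by omega⟩ : Fin p) < ⟨p - 1, by omega⟩ := by
      rw [Fin.lt_def]
      simp
      omega
    have horder : I ⟨p - 2, by omega⟩ < I ⟨p - 1, by omega⟩ := hmono hlt
    have hval : p ≤ (I ⟨p - 1, by omega⟩ : ℕ) := le_trans h2 (le_of_lt horder)
    refine HLaux.key M hMM (Fin.castLE hpn) I (Fin.castLE_injective hpn)
      hmono.injective (I ⟨p - 1, by omega⟩) (I ⟨p - 2, by omega⟩)
      (ne_of_gt horder) ⟨_, rfl⟩ ⟨_, rfl⟩ ?_ ?_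
    · rintro ⟨i, hi⟩
      have h4 : ((Fin.castLE hpn i : Fin n) : ℕ) < p := i.isLt
      rw [hi] at h4
      omega
    · rintro ⟨i, hi⟩
      have h4 : ((Fin.castLE hpn i : Fin n) : ℕ) < p := i.isLt
      rw [hi] at h4
      omega
  rw [happ]
  have hterm : ∀ I : Fin p → Fin n,
      b I * (M.submatrix id I).det ≤ |b I| * (1 - |x|) := by
    intro I
    rcases eq_or_ne (b I) 0 with h | h
    · simp [h]
    · have h1 : |(M.submatrix id I).det| ≤ 1 - |x| := by linarith [hkey I h]
      calc b I * (M.submatrix id I).det ≤ |b I * (M.submatrix id I).det| :=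
            le_abs_self _
        _ = |b I| * |(M.submatrix id I).det| := abs_mul _ _
        _ ≤ |b I| * (1 - |x|) := mul_le_mul_of_nonneg_left h1 (abs_nonneg _)
  calc x + ∑ I : Fin p → Fin n, b I * (M.submatrix id I).det
      ≤ |x| + ∑ I : Fin p → Fin n, |b I| * (1 - |x|) :=
        add_le_add (le_abs_self x) (Finset.sum_le_sum fun I _ => hterm I)
    _ = |x| + (∑ I : Fin p → Fin n, |b I|) * (1 - |x|) := by
        rw [← Finset.sum_mul]
    _ ≤ max 1 (∑ I : Fin p → Fin n, |b I|) := by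
        have h1 : (1:ℝ) ≤ max 1 (∑ I : Fin p → Fin n, |b I|) := le_max_left _ _
        have h2 : (∑ I : Fin p → Fin n, |b I|)
            ≤ max 1 (∑ I : Fin p → Fin n, |b I|) := le_max_right _ _
        nlinarith [mul_nonneg (sub_nonneg.2 hx1) (sub_nonneg.2 h2),
          mul_nonneg (abs_nonneg x) (sub_nonneg.2 h1)]
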